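/- Let X₁,…,X_m be Bernoulli {0,1} random variables satisfying, for every subset A ⊆ {1,…,m} of size k, P[∀ i ∈ A, Xᵢ = 1] ≤ ρ^k, where ρ ∈ (0,1). Then for any integer threshold s with 0 < k ≤ s ≤ m, P[∑ᵢ Xᵢ ≥ s] ≤ (C(m,k)/C(s,k))·ρ^k. -/

import Mathlib

open MeasureTheory
open scoped ENNReal

theorem stmt9 {Ω : Type*} [MeasurableSpace Ω] (P : Measure Ω) [IsProbabilityMeasure P]
    (m k s : ℕ) (X : Fin m → Ω → ℕ) (hmeas : ∀ i, Measurable (X i))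
    (h01 : ∀ i ω, X i ω ≤ 1) (ρ : ℝ) (hρ : ρ ∈ Set.Ioo (0 : ℝ) 1)
    (hk : 0 < k) (hks : k ≤ s) (hsm : s ≤ m)
    (hA : ∀ A : Finset (Fin m), A.card = k →
      P {ω | ∀ i ∈ A, X i ω = 1} ≤ ENNReal.ofReal (ρ ^ k)) :
    P {ω | s ≤ ∑ i, X i ω} ≤
      ENNReal.ofReal (((m.choose k : ℝ) / (s.choose k : ℝ)) * ρ ^ k) := by
  obtain ⟨hρ0, hρ1⟩ := hρ
  set 𝒜 := Finset.powersetCard k (Finset.univ : Finset (Fin m)) with h𝒜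
  have hmeasA : ∀ A : Finset (Fin m), MeasurableSet {ω | ∀ i ∈ A, X i ω = 1} := by
    intro A
    have : {ω | ∀ i ∈ A, X i ω = 1} = ⋂ i ∈ A, {ω | X i ω = 1} := by
      ext ω; simp
    rw [this]
    exact MeasurableSet.biInter A.countable_toSet fun i _ =>
      (hmeas i) (measurableSet_singleton 1)
  have hEmeas : MeasurableSet {ω | s ≤ ∑ i, X i ω} :=
    measurableSet_le measurable_const (Finset.measurable_sum _ fun i _ => hmeas i)
  -- key: choose s k * P(E) ≤ ∑_{A ∈ 𝒜} P(E_A)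
  have key : (s.choose k : ℝ≥0∞) * P {ω | s ≤ ∑ i, X i ω}
      ≤ ∑ A ∈ 𝒜, P {ω | ∀ i ∈ A, X i ω = 1} := by
    have hsum : ∑ A ∈ 𝒜, P {ω | ∀ i ∈ A, X i ω = 1}
        = ∫⁻ ω, ∑ A ∈ 𝒜, Set.indicator {ω | ∀ i ∈ A, X i ω = 1} (fun _ => 1) ω ∂P := by
      rw [MeasureTheory.lintegral_finset_sum]
      · simp_rw [MeasureTheory.lintegral_indicator_const (hmeasA _), one_mul]
      · exact fun A _ => (measurable_const.indicator (hmeasA A))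
    rw [hsum]
    have hP : (s.choose k : ℝ≥0∞) * P {ω | s ≤ ∑ i, X i ω}
        = ∫⁻ ω, Set.indicator {ω | s ≤ ∑ i, X i ω} (fun _ => (s.choose k : ℝ≥0∞)) ω ∂P := by
      rw [MeasureTheory.lintegral_indicator_const hEmeas, mul_comm]
    rw [hP]
    apply lintegral_mono
    intro ω
    by_cases hω : s ≤ ∑ i, X i ω
    · rw [Set.indicator_of_mem (show ω ∈ {ω | s ≤ ∑ i, X i ω} from hω)]
      -- count subsets
      set S := Finset.univ.filter (fun i => X i ω = 1) with hS
      have hScard : s ≤ S.card := by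
        calc s ≤ ∑ i, X i ω := hω
        _ ≤ S.card := by
            rw [hS, Finset.card_filter]
            apply Finset.sum_le_sum
            intro i _
            rcases Nat.le_one_iff_eq_zero_or_eq_one.mp (h01 i ω) with h | h <;> simp [h]
      have hsub : S.powersetCard k ⊆ 𝒜.filter (fun A => ∀ i ∈ A, X i ω = 1) := by
        intro A hA'
        rw [Finset.mem_powersetCard] at hA'
        rw [Finset.mem_filter, h𝒜, Finset.mem_powersetCard]
        refine ⟨⟨Finset.subset_univ _, hA'.2⟩, fun i hi => ?_⟩
        have := hA'.1 hi
        rw [hS, Finset.mem_filter] at this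
        exact this.2
      have hcount : s.choose k ≤ (𝒜.filter (fun A => ∀ i ∈ A, X i ω = 1)).card := by
        calc s.choose k ≤ S.card.choose k := Nat.choose_le_choose k hScard
        _ = (S.powersetCard k).card := (Finset.card_powersetCard k S).symm
        _ ≤ _ := Finset.card_le_card hsub
      calc (s.choose k : ℝ≥0∞)
          ≤ ((𝒜.filter (fun A => ∀ i ∈ A, X i ω = 1)).card : ℝ≥0∞) := by
            exact_mod_cast hcount
        _ = ∑ A ∈ 𝒜, Set.indicator {ω | ∀ i ∈ A, X i ω = 1} (fun _ => 1) ω := by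
            rw [Finset.card_filter]
            push_cast
            apply Finset.sum_congr rfl
            intro A _
            by_cases h : ∀ i ∈ A, X i ω = 1 <;> simp [h, Set.indicator]
    · rw [Set.indicator_of_notMem (show ω ∉ {ω | s ≤ ∑ i, X i ω} from hω)]
      exact zero_le
  have hsum_le : ∑ A ∈ 𝒜, P {ω | ∀ i ∈ A, X i ω = 1}
      ≤ (m.choose k : ℝ≥0∞) * ENNReal.ofReal (ρ ^ k) := by
    calc ∑ A ∈ 𝒜, P {ω | ∀ i ∈ A, X i ω = 1}
        ≤ ∑ _A ∈ 𝒜, ENNReal.ofReal (ρ ^ k) := by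
          apply Finset.sum_le_sum
          intro A hA'
          exact hA A (Finset.mem_powersetCard.mp hA').2
      _ = (m.choose k : ℝ≥0∞) * ENNReal.ofReal (ρ ^ k) := by
          rw [Finset.sum_const, nsmul_eq_mul, h𝒜, Finset.card_powersetCard,
            Finset.card_univ, Fintype.card_fin]
  have hchoose_pos : 0 < s.choose k := Nat.choose_pos hks
  have hfin : (s.choose k : ℝ≥0∞) ≠ 0 := by exact_mod_cast hchoose_pos.ne'
  have hne : (s.choose k : ℝ≥0∞) ≠ ⊤ := ENNReal.natCast_ne_top _
  have := le_trans (le_of_eq (mul_comm _ _)) (le_trans key hsum_le)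
  rw [← ENNReal.le_div_iff_mul_le (Or.inl hfin) (Or.inl hne)] at this
  refine this.trans (le_of_eq ?_)
  rw [ENNReal.ofReal_mul (by positivity), ENNReal.ofReal_div_of_pos (by exact_mod_cast hchoose_pos)]
  rw [ENNReal.ofReal_natCast, ENNReal.ofReal_natCast]
  rw [ENNReal.div_eq_inv_mul, ENNReal.div_eq_inv_mul]
  ring
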